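/- arXiv:2405.07732 — 2 statements merged into one kernel-verified Lean document; each statement's English description precedes it below -/
import Mathlib

section
/- Let Z1, Z2 be independent real random variables with bounded densities f1, f2 and let c1, c2 ∈ ℝ. Then (Z1 − c1)² + (Z2 − c2)² has a density bounded above by π · (sup f1) · (sup f2). -/
open MeasureTheory ProbabilityTheory Set

open scoped ENNReal

namespace Stmt14Aux

/-- Polar-coordinate change of variables for the Lebesgue (lower) integral. -/
theorem lintegral_comp_polarCoord_symm (f : ℝ × ℝ → ℝ≥0∞) :
    ∫⁻ p in polarCoord.target, ENNReal.ofReal p.1 * f (polarCoord.symm p) = ∫⁻ p, f p := by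
  set B : ℝ × ℝ → ℝ × ℝ →L[ℝ] ℝ × ℝ := fun p =>
    LinearMap.toContinuousLinearMap (Matrix.toLin (Module.Basis.finTwoProd ℝ) (Module.Basis.finTwoProd ℝ)
      !![Real.cos p.2, -p.1 * Real.sin p.2; Real.sin p.2, p.1 * Real.cos p.2])
  have A : ∀ p ∈ polarCoord.target,
      HasFDerivWithinAt polarCoord.symm (B p) polarCoord.target p :=
    fun p _ => (hasFDerivAt_polarCoord_symm p).hasFDerivWithinAt
  have B_det : ∀ p, (B p).det = p.1 := by
    intro p
    conv_rhs => rw [← one_mul p.1, ← Real.cos_sq_add_sin_sq p.2]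
    simp only [B, neg_mul, LinearMap.det_toContinuousLinearMap, LinearMap.det_toLin,
      Matrix.det_fin_two_of, sub_neg_eq_add]
    ring
  have hinj : InjOn polarCoord.symm polarCoord.target := polarCoord.symm.injOn
  symm
  calc
    ∫⁻ p, f p = ∫⁻ p in polarCoord.source, f p := by
      rw [← setLIntegral_univ]
      exact (setLIntegral_congr polarCoord_source_ae_eq_univ).symm
    _ = ∫⁻ p in polarCoord.symm '' polarCoord.target, f p := by
      rw [polarCoord.symm_image_target_eq_source]
    _ = ∫⁻ p in polarCoord.target, ENNReal.ofReal |(B p).det| * f (polarCoord.symm p) := by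
      exact lintegral_image_eq_lintegral_abs_det_fderiv_mul volume
        polarCoord.open_target.measurableSet A hinj f
    _ = ∫⁻ p in polarCoord.target, ENNReal.ofReal p.1 * f (polarCoord.symm p) := by
      apply setLIntegral_congr_fun polarCoord.open_target.measurableSet
      refine fun p hp => ?_
      beta_reduce
      rw [B_det, abs_of_pos hp.1]

/-- The area of the preimage of `A` under `(x, y) ↦ x² + y²` is at most `π · |A|`. -/
theorem key (A : Set ℝ) (hA : MeasurableSet A) :
    volume ((fun p : ℝ × ℝ => p.1 ^ 2 + p.2 ^ 2) ⁻¹' A)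
      ≤ ENNReal.ofReal Real.pi * volume A := by
  classical
  set S : Set (ℝ × ℝ) := (fun p : ℝ × ℝ => p.1 ^ 2 + p.2 ^ 2) ⁻¹' A with hSdef
  have hS : MeasurableSet S :=
    ((measurable_fst.pow_const 2).add (measurable_snd.pow_const 2)) hA
  have hmeas1 : Measurable fun r : ℝ => ENNReal.ofReal r * A.indicator 1 (r ^ 2) :=
    measurable_id.ennreal_ofReal.mul
      ((measurable_one.indicator hA).comp (measurable_id.pow_const 2))
  set I : ℝ≥0∞ := ∫⁻ r in Ioi (0 : ℝ), ENNReal.ofReal r * A.indicator 1 (r ^ 2) with hIdef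
  -- polar coordinates
  have h1 : volume S = ENNReal.ofReal (2 * Real.pi) * I := by
    have hvol : volume S = ∫⁻ p, S.indicator 1 p := (lintegral_indicator_one hS).symm
    rw [hvol, ← lintegral_comp_polarCoord_symm]
    have hcongr : ∫⁻ p in polarCoord.target,
        ENNReal.ofReal p.1 * S.indicator 1 (polarCoord.symm p)
        = ∫⁻ p in polarCoord.target, ENNReal.ofReal p.1 * A.indicator 1 (p.1 ^ 2) := by
      apply setLIntegral_congr_fun polarCoord.open_target.measurableSet
      refine fun p hp => ?_
      beta_reduce
      congr 1
      have hsq : (p.1 * Real.cos p.2) ^ 2 + (p.1 * Real.sin p.2) ^ 2 = p.1 ^ 2 := by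
        rw [mul_pow, mul_pow, ← mul_add, Real.cos_sq_add_sin_sq, mul_one]
      have hmem : ((p.1 * Real.cos p.2, p.1 * Real.sin p.2) : ℝ × ℝ) ∈ S ↔ p.1 ^ 2 ∈ A := by
        simp only [hSdef, mem_preimage]
        rw [hsq]
      by_cases h : p.1 ^ 2 ∈ A
      · rw [polarCoord_symm_apply, indicator_of_mem (hmem.2 h), indicator_of_mem h]
        rfl
      · rw [polarCoord_symm_apply, indicator_of_notMem (fun hc => h (hmem.1 hc)),
          indicator_of_notMem h]
    rw [hcongr]
    have htarget : polarCoord.target = Ioi (0 : ℝ) ×ˢ Ioo (-Real.pi) Real.pi := rfl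
    have hmeasg : Measurable fun p : ℝ × ℝ => ENNReal.ofReal p.1 * A.indicator 1 (p.1 ^ 2) :=
      measurable_fst.ennreal_ofReal.mul
        ((measurable_one.indicator hA).comp (measurable_fst.pow_const 2))
    rw [htarget, Measure.volume_eq_prod, ← Measure.prod_restrict,
      lintegral_prod _ hmeasg.aemeasurable]
    simp only [lintegral_const, Measure.restrict_apply_univ]
    have hIoo : volume (Ioo (-Real.pi) Real.pi) = ENNReal.ofReal (2 * Real.pi) := by
      rw [Real.volume_Ioo]
      congr 1
      ring
    calc
      ∫⁻ x in Ioi (0:ℝ), (ENNReal.ofReal x * A.indicator 1 (x ^ 2))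
            * volume (Ioo (-Real.pi) Real.pi)
          = ∫⁻ x in Ioi (0:ℝ), (ENNReal.ofReal x * A.indicator 1 (x ^ 2))
            * ENNReal.ofReal (2 * Real.pi) := by rw [hIoo]
      _ = I * ENNReal.ofReal (2 * Real.pi) := lintegral_mul_const _ hmeas1
      _ = ENNReal.ofReal (2 * Real.pi) * I := mul_comm _ _
  -- the substitution s = r²
  have h2 : volume (A ∩ Ioi (0 : ℝ)) = 2 * I := by
    have himg : (fun r : ℝ => r ^ 2) '' Ioi 0 = Ioi 0 := by
      ext s
      constructor
      · rintro ⟨r, hr, rfl⟩; exact pow_pos (mem_Ioi.mp hr) 2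
      · intro hs; exact ⟨Real.sqrt s, Real.sqrt_pos.2 hs, Real.sq_sqrt hs.le⟩
    have hderiv : ∀ x ∈ Ioi (0 : ℝ),
        HasDerivWithinAt (fun r : ℝ => r ^ 2) (2 * x) (Ioi 0) x := by
      intro x _
      simpa using (hasDerivAt_pow 2 x).hasDerivWithinAt
    have hinj : InjOn (fun r : ℝ => r ^ 2) (Ioi 0) :=
      (pow_left_strictMonoOn₀ two_ne_zero).injOn.mono fun x hx => le_of_lt hx
    have hsub := lintegral_image_eq_lintegral_abs_det_fderiv_mul volume measurableSet_Ioi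
      (f' := fun x => ContinuousLinearMap.smulRight (1 : ℝ →L[ℝ] ℝ) (2 * x))
      (fun x hx => (hderiv x hx).hasFDerivWithinAt) hinj (A.indicator 1)
    simp only [ContinuousLinearMap.det_smulRight, ContinuousLinearMap.one_apply, one_mul] at hsub
    rw [himg] at hsub
    have hL : ∫⁻ s in Ioi (0 : ℝ), A.indicator 1 s = volume (A ∩ Ioi 0) := by
      rw [lintegral_indicator_one hA, Measure.restrict_apply hA]
    have hR : ∫⁻ x in Ioi (0 : ℝ), ENNReal.ofReal |2 * x| * A.indicator 1 (x ^ 2)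
        = 2 * I := by
      have hc : ∫⁻ x in Ioi (0 : ℝ), ENNReal.ofReal |2 * x| * A.indicator 1 (x ^ 2)
          = ∫⁻ x in Ioi (0 : ℝ), 2 * (ENNReal.ofReal x * A.indicator 1 (x ^ 2)) := by
        apply setLIntegral_congr_fun measurableSet_Ioi
        refine fun x hx => ?_
        beta_reduce
        rw [abs_of_pos (mul_pos two_pos (mem_Ioi.mp hx)), ENNReal.ofReal_mul (by norm_num),
          mul_assoc]
        norm_num
      rw [hc, lintegral_const_mul 2 hmeas1]
    rw [← hL, hsub, hR]
  -- conclude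
  have hle : volume (A ∩ Ioi (0 : ℝ)) ≤ volume A := measure_mono inter_subset_left
  calc
    volume S = ENNReal.ofReal (2 * Real.pi) * I := h1
    _ = ENNReal.ofReal Real.pi * (2 * I) := by
      rw [ENNReal.ofReal_mul (by norm_num : (0:ℝ) ≤ 2), ENNReal.ofReal_ofNat]
      ring
    _ = ENNReal.ofReal Real.pi * volume (A ∩ Ioi 0) := by rw [h2]
    _ ≤ ENNReal.ofReal Real.pi * volume A := mul_le_mul_right hle _

end Stmt14Aux

open Stmt14Aux

/-- Let `Z1, Z2` be independent real random variables with bounded densities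
`f1, f2` and let `c1, c2 ∈ ℝ`. Then `(Z1 − c1)² + (Z2 − c2)²` has a density
bounded above by `π · (sup f1) · (sup f2)`. -/
theorem stmt_14 {Ω : Type*} [MeasurableSpace Ω] (P : Measure Ω) [IsProbabilityMeasure P]
    (Z1 Z2 : Ω → ℝ) (hZ1 : Measurable Z1) (hZ2 : Measurable Z2)
    (hind : ProbabilityTheory.IndepFun Z1 Z2 P)
    (f1 f2 : ℝ → ℝ) (hf1 : 0 ≤ f1) (hf2 : 0 ≤ f2)
    (M1 M2 : ℝ) (hM1 : ∀ s, f1 s ≤ M1) (hM2 : ∀ s, f2 s ≤ M2)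
    (hd1 : P.map Z1 = volume.withDensity (fun s => ENNReal.ofReal (f1 s)))
    (hd2 : P.map Z2 = volume.withDensity (fun s => ENNReal.ofReal (f2 s)))
    (c1 c2 : ℝ) :
    ∃ g : ℝ → ℝ, 0 ≤ g ∧ (∀ s, g s ≤ Real.pi * M1 * M2) ∧
      P.map (fun ω => (Z1 ω - c1) ^ 2 + (Z2 ω - c2) ^ 2)
        = volume.withDensity (fun s => ENNReal.ofReal (g s)) := by
  classical
  have hTmeas : Measurable fun ω => (Z1 ω - c1) ^ 2 + (Z2 ω - c2) ^ 2 :=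
    ((hZ1.sub_const c1).pow_const 2).add ((hZ2.sub_const c2).pow_const 2)
  set μ : Measure ℝ := P.map (fun ω => (Z1 ω - c1) ^ 2 + (Z2 ω - c2) ^ 2) with hμ
  have hM1' : 0 ≤ M1 := le_trans (hf1 0) (hM1 0)
  have hM2' : 0 ≤ M2 := le_trans (hf2 0) (hM2 0)
  set C : ℝ := Real.pi * M1 * M2 with hC
  have hC0 : 0 ≤ C := by positivity
  haveI hprob : IsProbabilityMeasure μ := Measure.isProbabilityMeasure_map hTmeas.aemeasurable
  haveI hprob1 : IsProbabilityMeasure (P.map Z1) := Measure.isProbabilityMeasure_map hZ1.aemeasurable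
  haveI hprob2 : IsProbabilityMeasure (P.map Z2) := Measure.isProbabilityMeasure_map hZ2.aemeasurable
  set q : ℝ × ℝ → ℝ := fun p => (p.1 - c1) ^ 2 + (p.2 - c2) ^ 2 with hq
  have hqmeas : Measurable q :=
    ((measurable_fst.sub_const c1).pow_const 2).add ((measurable_snd.sub_const c2).pow_const 2)
  have hpair : Measurable fun ω => (Z1 ω, Z2 ω) := hZ1.prodMk hZ2
  have hmap : μ = ((P.map Z1).prod (P.map Z2)).map q := by
    rw [hμ, ← (indepFun_iff_map_prod_eq_prod_map_map hZ1.aemeasurable hZ2.aemeasurable).mp hind,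
      Measure.map_map hqmeas hpair]
    rfl
  have hν2 : ∀ s : Set ℝ, MeasurableSet s → (P.map Z2) s ≤ ENNReal.ofReal M2 * volume s := by
    intro s hs
    rw [hd2, withDensity_apply _ hs]
    calc ∫⁻ x in s, ENNReal.ofReal (f2 x) ∂volume
        ≤ ∫⁻ _ in s, ENNReal.ofReal M2 ∂volume :=
          lintegral_mono fun x => ENNReal.ofReal_le_ofReal (hM2 x)
      _ = ENNReal.ofReal M2 * volume s := by rw [setLIntegral_const]
  have hν1 : P.map Z1 ≤ ENNReal.ofReal M1 • volume := by
    refine Measure.le_iff.2 fun s hs => ?_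
    rw [hd1, withDensity_apply _ hs, Measure.smul_apply, smul_eq_mul]
    calc ∫⁻ x in s, ENNReal.ofReal (f1 x) ∂volume
        ≤ ∫⁻ _ in s, ENNReal.ofReal M1 ∂volume :=
          lintegral_mono fun x => ENNReal.ofReal_le_ofReal (hM1 x)
      _ = ENNReal.ofReal M1 * volume s := by rw [setLIntegral_const]
  -- the main quantitative bound
  have hbound : ∀ A : Set ℝ, MeasurableSet A → μ A ≤ ENNReal.ofReal C * volume A := by
    intro A hA
    rw [hmap, Measure.map_apply hqmeas hA]
    set S : Set (ℝ × ℝ) := q ⁻¹' A with hSdef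
    have hS : MeasurableSet S := hqmeas hA
    set S0 : Set (ℝ × ℝ) := (fun p : ℝ × ℝ => p.1 ^ 2 + p.2 ^ 2) ⁻¹' A with hS0def
    have hSS0 : S = (fun p : ℝ × ℝ => p + (-c1, -c2)) ⁻¹' S0 := by
      ext p
      simp only [hSdef, hS0def, mem_preimage, hq, Prod.fst_add, Prod.snd_add, sub_eq_add_neg]
    have hvolS : volume S ≤ ENNReal.ofReal Real.pi * volume A := by
      rw [hSS0, measure_preimage_add_right]
      exact key A hA
    calc ((P.map Z1).prod (P.map Z2)) S
        = ∫⁻ x, (P.map Z2) (Prod.mk x ⁻¹' S) ∂(P.map Z1) := Measure.prod_apply hS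
      _ ≤ ∫⁻ x, ENNReal.ofReal M2 * volume (Prod.mk x ⁻¹' S)
            ∂(ENNReal.ofReal M1 • volume) :=
          lintegral_mono' hν1 fun x => hν2 _ (measurable_prodMk_left hS)
      _ = ENNReal.ofReal M1 * (ENNReal.ofReal M2
            * ∫⁻ x, volume (Prod.mk x ⁻¹' S) ∂volume) := by
          rw [lintegral_smul_measure, smul_eq_mul,
            lintegral_const_mul _ (measurable_measure_prodMk_left hS)]
      _ = ENNReal.ofReal M1 * (ENNReal.ofReal M2 * volume S) := by
          rw [Measure.volume_eq_prod, Measure.prod_apply hS]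
      _ ≤ ENNReal.ofReal M1 * (ENNReal.ofReal M2
            * (ENNReal.ofReal Real.pi * volume A)) :=
          mul_le_mul_right (mul_le_mul_right hvolS _) _
      _ = ENNReal.ofReal C * volume A := by
          rw [hC, ENNReal.ofReal_mul (by positivity : (0:ℝ) ≤ Real.pi * M1),
            ENNReal.ofReal_mul Real.pi_pos.le]
          ring
  -- absolute continuity and the Radon–Nikodym derivative
  have hac : μ ≪ volume := by
    refine Measure.AbsolutelyContinuous.mk fun s hs h0 => ?_
    exact le_antisymm (by simpa [h0] using hbound s hs) (zero_le)
  have hrn : μ.rnDeriv volume ≤ᵐ[volume] fun _ => ENNReal.ofReal C := by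
    refine ae_le_of_forall_setLIntegral_le_of_sigmaFinite₀
      (μ.measurable_rnDeriv volume).aemeasurable fun s hs _ => ?_
    calc ∫⁻ x in s, μ.rnDeriv volume x ∂volume
        ≤ μ s := Measure.setLIntegral_rnDeriv_le s
      _ ≤ ENNReal.ofReal C * volume s := hbound s hs
      _ = ∫⁻ _ in s, ENNReal.ofReal C ∂volume := by rw [setLIntegral_const]
  have hfin : ∀ᵐ x ∂volume, μ.rnDeriv volume x < ∞ := Measure.rnDeriv_lt_top μ volume
  refine ⟨fun s => min ((μ.rnDeriv volume s).toReal) C,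
    fun s => le_min ENNReal.toReal_nonneg hC0, fun s => min_le_right _ _, ?_⟩
  have hae : (fun s => ENNReal.ofReal (min ((μ.rnDeriv volume s).toReal) C))
      =ᵐ[volume] μ.rnDeriv volume := by
    filter_upwards [hrn, hfin] with x h1 h2
    have htr : (μ.rnDeriv volume x).toReal ≤ C :=
      ENNReal.toReal_le_of_le_ofReal hC0 h1
    rw [min_eq_left htr, ENNReal.ofReal_toReal h2.ne]
  calc μ = volume.withDensity (μ.rnDeriv volume) :=
        (Measure.withDensity_rnDeriv_eq μ volume hac).symm
    _ = volume.withDensity (fun s => ENNReal.ofReal (min ((μ.rnDeriv volume s).toReal) C)) :=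
        (withDensity_congr_ae hae).symm
end

section
/- Let X_1, …, X_n be points in a Hilbert space of the form X_i = A_i e_{K_i} with (e_k) orthonormal, all distances between distinct points distinct (so nearest neighbors are unique). Suppose the indices k with |{i : K_i = k}| = 1 number G_n. Then the maximal nearest-neighbor in-degree L_n of the sample satisfies L_n ≥ G_n − 1. -/
open scoped Classical

/-- Let `X 0, …, X (n−1)` be distinct points of a real Hilbert space of the form
`X i = A i • e (K i)` with `(e_k)` orthonormal, and let `N` be the (unique, strict)
nearest-neighbor map of the sample. If `G_n` is the number of values `k` attained by
exactly one of the `K i`, then the maximal nearest-neighbor in-degree `L_n` of the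
sample satisfies `L_n ≥ G_n − 1`. -/
theorem stmt_18 {H : Type*} [NormedAddCommGroup H] [InnerProductSpace ℝ H]
    {n : ℕ} (hn : 2 ≤ n)
    (e : ℕ → H) (he : Orthonormal ℝ e)
    (A : Fin n → ℝ) (K : Fin n → ℕ)
    (X : Fin n → H) (hX : ∀ i, X i = A i • e (K i))
    (hinj : Function.Injective X)
    (N : Fin n → Fin n)
    (hN : ∀ i, N i ≠ i ∧ ∀ j, j ≠ i → j ≠ N i → ‖X i - X (N i)‖ < ‖X i - X j‖) :
    ((Finset.univ.image K).filter
        (fun k => (Finset.univ.filter (fun i : Fin n => K i = k)).card = 1)).card - 1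
      ≤ Finset.univ.sup
          (fun i : Fin n => (Finset.univ.filter (fun j => j ≠ i ∧ N j = i)).card) := by
  have hnz : 0 < n := by omega
  -- the set of "singleton" indices
  set T : Finset (Fin n) := Finset.univ.filter
      (fun i => (Finset.univ.filter (fun j : Fin n => K j = K i)).card = 1) with hT
  -- orthogonality: a singleton point is orthogonal to every other point
  have horth : ∀ i ∈ T, ∀ u : Fin n, u ≠ i →
      ‖X i - X u‖ ^ 2 = ‖X i‖ ^ 2 + ‖X u‖ ^ 2 := by
    intro i hi u hu
    have hcard : (Finset.univ.filter (fun j : Fin n => K j = K i)).card = 1 :=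
      (Finset.mem_filter.1 hi).2
    have hK : K i ≠ K u := by
      intro h
      have h1 : u ∈ Finset.univ.filter (fun j : Fin n => K j = K i) := by
        simp [h.symm]
      have h2 : i ∈ Finset.univ.filter (fun j : Fin n => K j = K i) := by simp
      exact hu (Finset.card_le_one.1 (le_of_eq hcard) u h1 i h2)
    have hip : (inner ℝ (X i) (X u) : ℝ) = 0 := by
      rw [hX i, hX u, real_inner_smul_left, real_inner_smul_right, he.2 hK,
        mul_zero, mul_zero]
    rw [@norm_sub_sq_real _ _ _ (X i) (X u), hip]
    ring
  -- the nearest neighbor of a singleton point has globally (almost) minimal norm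
  have key : ∀ i ∈ T, ∀ j : Fin n, j ≠ i → j ≠ N i → ‖X (N i)‖ < ‖X j‖ := by
    intro i hi j hj hjN
    have h1 := (hN i).2 j hj hjN
    have e1 := horth i hi (N i) (hN i).1
    have e2 := horth i hi j hj
    have hsq1 : ‖X i - X (N i)‖ ^ 2 < ‖X i - X j‖ ^ 2 :=
      pow_lt_pow_left₀ h1 (norm_nonneg _) (by norm_num)
    have hsq : ‖X (N i)‖ ^ 2 < ‖X j‖ ^ 2 := by linarith
    exact lt_of_pow_lt_pow_left₀ 2 (norm_nonneg _) hsq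
  -- the global minimizer of the norm
  have : Nonempty (Fin n) := ⟨⟨0, hnz⟩⟩
  obtain ⟨m, -, hm⟩ := Finset.exists_min_image Finset.univ (fun j => ‖X j‖)
    Finset.univ_nonempty
  have hNm : ∀ i ∈ T, i ≠ m → N i = m := by
    intro i hi him
    by_contra hx
    exact absurd (key i hi m (Ne.symm him) (fun h => hx h.symm))
      (not_lt.2 (hm (N i) (Finset.mem_univ _)))
  -- the set of singleton values is the image of T under K, and K is injective on T
  have hV : ((Finset.univ.image K).filter
      (fun k => (Finset.univ.filter (fun i : Fin n => K i = k)).card = 1))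
      = T.image K := by
    ext k
    simp only [Finset.mem_filter, Finset.mem_image, Finset.mem_univ, true_and, hT]
    constructor
    · rintro ⟨⟨i, rfl⟩, hc⟩
      refine ⟨i, ?_, rfl⟩
      simpa using hc
    · rintro ⟨i, hi, rfl⟩
      exact ⟨⟨i, rfl⟩, by simpa using hi⟩
  have hinjT : Set.InjOn K T := by
    intro i hi j hj hij
    have hci : (Finset.univ.filter (fun u : Fin n => K u = K i)).card = 1 :=
      (Finset.mem_filter.1 hi).2
    have h1 : i ∈ Finset.univ.filter (fun u : Fin n => K u = K i) := by simp
    have h2 : j ∈ Finset.univ.filter (fun u : Fin n => K u = K i) := by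
      simp [hij]
    exact (Finset.card_le_one.1 (le_of_eq hci) i h1 j h2)
  have hcardV : ((Finset.univ.image K).filter
      (fun k => (Finset.univ.filter (fun i : Fin n => K i = k)).card = 1)).card
      = T.card := by
    rw [hV, Finset.card_image_of_injOn hinjT]
  -- final counting
  have hsub : T.erase m ⊆ Finset.univ.filter (fun j => j ≠ m ∧ N j = m) := by
    intro i hi
    have hi' := Finset.mem_erase.1 hi
    exact Finset.mem_filter.2 ⟨Finset.mem_univ _, hi'.1, hNm i hi'.2 hi'.1⟩
  calc ((Finset.univ.image K).filter
        (fun k => (Finset.univ.filter (fun i : Fin n => K i = k)).card = 1)).card - 1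
      = T.card - 1 := by rw [hcardV]
    _ ≤ (T.erase m).card := Finset.pred_card_le_card_erase
    _ ≤ (Finset.univ.filter (fun j => j ≠ m ∧ N j = m)).card :=
        Finset.card_le_card hsub
    _ ≤ Finset.univ.sup
          (fun i : Fin n => (Finset.univ.filter (fun j => j ≠ i ∧ N j = i)).card) :=
        Finset.le_sup (f := fun i : Fin n => (Finset.univ.filter (fun j => j ≠ i ∧ N j = i)).card) (Finset.mem_univ m)
end
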